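/- Let G be a connected graph on [n] that has the interval property with respect to its labeling. Then the bipartite graph H = in_lex(G) on the vertex set {x_1,…,x_n} ∪ {y_1,…,y_n} is weakly chordal. -/

import Mathlib

open SimpleGraph

/-- `G` has the interval property with respect to its labeling: for every edge `{i,j}`
with `i < j`, every pair `{k,l}` with `i ≤ k < l ≤ j` is an edge of `G`. -/
def HasIntervalProperty {n : ℕ} (G : SimpleGraph (Fin n)) : Prop :=
  ∀ i j k l : Fin n, G.Adj i j → i < j → i ≤ k → k < l → l ≤ j → G.Adj k l

/-- The bipartite graph `in_lex(G)` on `{x_1,…,x_n} ∪ {y_1,…,y_n}` (here `Sum.inl i = x_i`,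
`Sum.inr j = y_j`) whose edges are the pairs `{x_i, y_j}` with `i < j` and `{i,j} ∈ E(G)`. -/
def inLex {n : ℕ} (G : SimpleGraph (Fin n)) : SimpleGraph (Fin n ⊕ Fin n) :=
  SimpleGraph.fromRel (fun u v =>
    ∃ i j : Fin n, i < j ∧ G.Adj i j ∧ u = Sum.inl i ∧ v = Sum.inr j)

/-- `M` is an induced matching of `H`: a set of edges of `H`, pairwise vertex-disjoint,
such that no edge of `H` joins two vertices lying in distinct edges of `M`. -/
def IsInducedMatching {V : Type*} (H : SimpleGraph V) (M : Set (Sym2 V)) : Prop :=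
  M ⊆ H.edgeSet ∧
  (∀ e ∈ M, ∀ f ∈ M, e ≠ f → ∀ v, v ∈ e → v ∉ f) ∧
  (∀ e ∈ M, ∀ f ∈ M, e ≠ f → ∀ u ∈ e, ∀ v ∈ f, ¬ H.Adj u v)

/-- An indexed family of `m` pairwise distinct edges forming an induced matching of `H`. -/
def IsInducedMatchingFamily {V : Type*} (H : SimpleGraph V) {m : ℕ} (f : Fin m → Sym2 V) : Prop :=
  Function.Injective f ∧ IsInducedMatching H (Set.range f)

/-- `p` is an induced path of length `l` in `G`: `l+1` distinct vertices such that the edges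
of `G` among them are exactly the consecutive pairs. -/
def IsInducedPath {V : Type*} (G : SimpleGraph V) (l : ℕ) (p : Fin (l + 1) → V) : Prop :=
  Function.Injective p ∧
  ∀ a b : Fin (l + 1), G.Adj (p a) (p b) ↔ ((a : ℕ) + 1 = b ∨ (b : ℕ) + 1 = a)

/-- `c` is an induced cycle of length `k` in `H`: `k` distinct vertices such that the edges
of `H` among them are exactly the consecutive pairs (cyclically). -/
def IsInducedCycle {V : Type*} (H : SimpleGraph V) (k : ℕ) (c : Fin k → V) : Prop :=
  3 ≤ k ∧ Function.Injective c ∧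
  ∀ a b : Fin k, H.Adj (c a) (c b) ↔ (((a : ℕ) + 1) % k = b ∨ ((b : ℕ) + 1) % k = a)

/-- Condition (∗) for an induced matching `{x_{i t}, y_{j t}}` of `in_lex(G)`: for every
index `a` and vertex `t < i a` with `{t, j a} ∈ E(G)`, replacing `x_{i a}` by `x_t`
does not yield an induced matching of `in_lex(G)`. -/
def CondStar {n m : ℕ} (G : SimpleGraph (Fin n)) (i j : Fin m → Fin n) : Prop :=
  ∀ a : Fin m, ∀ t : Fin n, t < i a → G.Adj t (j a) →
    ¬ IsInducedMatchingFamily (inLex G)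
        (fun u => if u = a then s(Sum.inl t, Sum.inr (j u))
                  else s(Sum.inl (i u), Sum.inr (j u)))

section AuxFin

variable {k : ℕ} [NeZero k]

open Fin.NatCast Fin.CommRing

lemma aux_consec (hk : 5 ≤ k) (d b : Fin k) : ((d:ℕ)+1) % k = (b:ℕ) ↔ d + 1 = b := by
  rw [Fin.ext_iff, Fin.val_add, Fin.val_one', Nat.mod_eq_of_lt (show 1 < k by omega)]

lemma aux_four_ne (hk : 5 ≤ k) : (4:Fin k) ≠ 0 := by
  have h4 : ((4:ℕ):Fin k) = (4:Fin k) := by norm_cast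
  rw [← h4, Ne, Fin.natCast_eq_zero]
  exact fun h => absurd (Nat.le_of_dvd (by norm_num) h) (by omega)

lemma aux_two_ne (hk : 5 ≤ k) : (2:Fin k) ≠ 0 := by
  have h4 : ((2:ℕ):Fin k) = (2:Fin k) := by norm_cast
  rw [← h4, Ne, Fin.natCast_eq_zero]
  exact fun h => absurd (Nat.le_of_dvd (by norm_num) h) (by omega)

lemma aux_shift2 (hk : 5 ≤ k) (a : Fin k) (h : a + 2 = a) : False :=
  aux_two_ne hk (add_eq_left.mp h)

lemma aux_shift4 (hk : 5 ≤ k) (a : Fin k) (h : a + 4 = a) : False :=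
  aux_four_ne hk (add_eq_left.mp h)

end AuxFin

section AuxLex

variable {n : ℕ} {G : SimpleGraph (Fin n)}

lemma aux_adj_inl {i : Fin n} {u : Fin n ⊕ Fin n} (h : (inLex G).Adj (Sum.inl i) u) :
    ∃ j, u = Sum.inr j ∧ i < j ∧ G.Adj i j := by
  rw [inLex, SimpleGraph.fromRel_adj] at h
  obtain ⟨-, ⟨i', j', hlt, hadj, hu, hv⟩ | ⟨i', j', hlt, hadj, hu, hv⟩⟩ := h
  · obtain rfl : i = i' := by simpa using hu
    exact ⟨j', hv, hlt, hadj⟩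
  · simp at hv

lemma aux_adj_inr {j : Fin n} {u : Fin n ⊕ Fin n} (h : (inLex G).Adj u (Sum.inr j)) :
    ∃ i, u = Sum.inl i ∧ i < j ∧ G.Adj i j := by
  rw [inLex, SimpleGraph.fromRel_adj] at h
  obtain ⟨-, ⟨i', j', hlt, hadj, hu, hv⟩ | ⟨i', j', hlt, hadj, hu, hv⟩⟩ := h
  · obtain rfl : j = j' := by simpa using hv
    exact ⟨i', hu, hlt, hadj⟩
  · simp at hu

lemma aux_adj_of {i j : Fin n} (hlt : i < j) (hadj : G.Adj i j) :
    (inLex G).Adj (Sum.inl i) (Sum.inr j) := by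
  rw [inLex, SimpleGraph.fromRel_adj]
  exact ⟨by simp, Or.inl ⟨i, j, hlt, hadj, rfl, rfl⟩⟩

lemma aux_not_adj_same {u v : Fin n ⊕ Fin n} (h : u.isLeft = v.isLeft) :
    ¬ (inLex G).Adj u v := by
  rw [inLex, SimpleGraph.fromRel_adj]
  rintro ⟨hne, ⟨i, j, -, -, rfl, rfl⟩ | ⟨i, j, -, -, rfl, rfl⟩⟩ <;> simp at h

end AuxLex

/-- If `G` is connected and has the interval property, then the bipartite graph
`H = in_lex(G)` is weakly chordal: neither `H` nor its complement contains an induced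
cycle of length at least 5. -/
theorem stmt_3 {n : ℕ} (G : SimpleGraph (Fin n)) (hconn : G.Connected)
    (hG : HasIntervalProperty G) :
    (∀ k : ℕ, 5 ≤ k → ∀ c : Fin k → (Fin n ⊕ Fin n), ¬ IsInducedCycle (inLex G) k c) ∧
    (∀ k : ℕ, 5 ≤ k → ∀ c : Fin k → (Fin n ⊕ Fin n), ¬ IsInducedCycle (inLex G)ᶜ k c) := by
  constructor
  · -- no induced cycle of length ≥ 5 in inLex G
    rintro k hk c ⟨hk3, hinj, hiff⟩
    haveI : NeZero k := ⟨by omega⟩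
    -- there is a vertex of the cycle of the form `Sum.inl i`
    have hex : ∃ i : Fin n, ∃ a : Fin k, c a = Sum.inl i := by
      have hadj01 : (inLex G).Adj (c 0) (c (0 + 1)) :=
        (hiff 0 (0 + 1)).mpr (Or.inl ((aux_consec hk 0 (0 + 1)).mpr rfl))
      cases h0 : c 0 with
      | inl i => exact ⟨i, 0, h0⟩
      | inr j =>
        rw [h0] at hadj01
        obtain ⟨i, hu, -, -⟩ := aux_adj_inr hadj01.symm
        exact ⟨i, 0 + 1, hu⟩
    -- choose a minimal such index
    classical
    let T : Finset (Fin n) := Finset.univ.filter (fun i => ∃ a : Fin k, c a = Sum.inl i)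
    have hTne : T.Nonempty := by
      obtain ⟨i, a, ha⟩ := hex
      exact ⟨i, by simp [T]; exact ⟨a, ha⟩⟩
    set i0 := T.min' hTne with hi0def
    have hmin : ∀ (p : Fin k) (i : Fin n), c p = Sum.inl i → i0 ≤ i := by
      intro p i hp
      exact T.min'_le i (by simp [T]; exact ⟨p, hp⟩)
    obtain ⟨a, ha⟩ : ∃ a : Fin k, c a = Sum.inl i0 := by
      have := T.min'_mem hTne
      simp [T] at this
      exact this
    -- the two neighbours of `c a` on the cycle
    have hA1 : (inLex G).Adj (c a) (c (a + 1)) :=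
      (hiff a (a + 1)).mpr (Or.inl ((aux_consec hk a (a + 1)).mpr rfl))
    have hA2 : (inLex G).Adj (c (a - 1)) (c a) :=
      (hiff (a - 1) a).mpr (Or.inl ((aux_consec hk (a - 1) a).mpr (by open Fin.CommRing in ring)))
    rw [ha] at hA1 hA2
    obtain ⟨j1, hcj1, hij1, hadj1⟩ := aux_adj_inl hA1
    obtain ⟨j2, hcj2, hij2, hadj2⟩ := aux_adj_inl hA2.symm
    -- the two neighbours are distinct
    have hjne : j1 ≠ j2 := by
      intro h
      have hcc : c (a + 1) = c (a - 1) := by rw [hcj1, hcj2, h]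
      have h' : a + 1 = a - 1 := hinj hcc
      exact aux_shift2 hk a (by open Fin.CommRing in linear_combination h')
    rcases lt_or_gt_of_ne hjne with hlt | hlt
    · -- j1 < j2 : small side is at a+1, big side at a-1, other neighbour of a+1 is a+1+1
      have hA3 : (inLex G).Adj (c (a + 1)) (c (a + 1 + 1)) :=
        (hiff (a + 1) (a + 1 + 1)).mpr (Or.inl ((aux_consec hk (a + 1) (a + 1 + 1)).mpr rfl))
      rw [hcj1] at hA3
      obtain ⟨i2, hcd, hi2j, hadjd⟩ := aux_adj_inr hA3.symm
      have hdne : a + 1 + 1 ≠ a := fun h => aux_shift2 hk a (by open Fin.CommRing in linear_combination h)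
      have hi0i2 : i0 < i2 := by
        rcases lt_or_eq_of_le (hmin _ _ hcd) with h | h
        · exact h
        · exact absurd (hinj (hcd.trans (h ▸ ha.symm))) hdne
      have hchord : G.Adj i2 j2 :=
        hG i0 j2 i2 j2 hadj2 hij2 (le_of_lt hi0i2) (lt_trans hi2j hlt) le_rfl
      have hAc : (inLex G).Adj (c (a + 1 + 1)) (c (a - 1)) := by
        rw [hcd, hcj2]
        exact aux_adj_of (lt_trans hi2j hlt) hchord
      rcases (hiff (a + 1 + 1) (a - 1)).mp hAc with h | h
      · exact aux_shift4 hk a (by open Fin.CommRing in linear_combination (aux_consec hk _ _).mp h)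
      · exact aux_shift2 hk a (by open Fin.CommRing in linear_combination - (aux_consec hk _ _).mp h)
    · -- j2 < j1 : small side at a-1, big side at a+1, other neighbour of a-1 is a-1-1
      have hA3 : (inLex G).Adj (c (a - 1 - 1)) (c (a - 1)) :=
        (hiff (a - 1 - 1) (a - 1)).mpr (Or.inl ((aux_consec hk (a - 1 - 1) (a - 1)).mpr (by open Fin.CommRing in ring)))
      rw [hcj2] at hA3
      obtain ⟨i2, hcd, hi2j, hadjd⟩ := aux_adj_inr hA3
      have hdne : a - 1 - 1 ≠ a := fun h => aux_shift2 hk (a - 1 - 1) (by open Fin.CommRing in linear_combination - h)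
      have hi0i2 : i0 < i2 := by
        rcases lt_or_eq_of_le (hmin _ _ hcd) with h | h
        · exact h
        · exact absurd (hinj (hcd.trans (h ▸ ha.symm))) hdne
      have hchord : G.Adj i2 j1 :=
        hG i0 j1 i2 j1 hadj1 hij1 (le_of_lt hi0i2) (lt_trans hi2j hlt) le_rfl
      have hAc : (inLex G).Adj (c (a - 1 - 1)) (c (a + 1)) := by
        rw [hcd, hcj1]
        exact aux_adj_of (lt_trans hi2j hlt) hchord
      rcases (hiff (a - 1 - 1) (a + 1)).mp hAc with h | h
      · exact aux_shift2 hk (a - 1) (by open Fin.CommRing in linear_combination - (aux_consec hk _ _).mp h)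
      · exact aux_shift4 hk (a - 1 - 1) (by open Fin.CommRing in linear_combination (aux_consec hk _ _).mp h)
  · -- no induced cycle of length ≥ 5 in the complement
    rintro k hk c ⟨hk3, hinj, hiff⟩
    -- if two vertices on the same side are non-consecutive positions, contradiction
    have key : ∀ a b : Fin k, (c a).isLeft = (c b).isLeft → a ≠ b →
        (((a:ℕ)+1) % k ≠ (b:ℕ)) → (((b:ℕ)+1) % k ≠ (a:ℕ)) → False := by
      intro a b hside hab h1 h2
      have hadj : (inLex G)ᶜ.Adj (c a) (c b) := by
        rw [SimpleGraph.compl_adj]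
        exact ⟨fun h => hab (hinj h), aux_not_adj_same hside⟩
      rcases (hiff a b).mp hadj with h | h
      · exact h1 h
      · exact h2 h
    -- five vertices, find a same-side non-consecutive pair
    have p0 : Fin k := ⟨0, by omega⟩
    let q : ℕ → Fin k := fun m => ⟨m % k, Nat.mod_lt _ (by omega)⟩
    have hqval : ∀ m : ℕ, m < 5 → ((q m : Fin k) : ℕ) = m := by
      intro m hm
      simp only [q]
      exact Nat.mod_eq_of_lt (by omega)
    have hqne : ∀ m l : ℕ, m < 5 → l < 5 → m ≠ l → q m ≠ q l := by
      intro m l hm hl hml h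
      apply hml
      have := congrArg (Fin.val) h
      rwa [hqval m hm, hqval l hl] at this
    have hqnc : ∀ m l : ℕ, m < 5 → l < 5 → m + 1 ≠ l → (l = 0 → m ≠ 4) →
        ((q m : ℕ)+1) % k ≠ (q l : ℕ) := by
      intro m l hm hl hml hl0
      rw [hqval m hm, hqval l hl]
      rcases Nat.lt_or_ge (m+1) k with h | h
      · rw [Nat.mod_eq_of_lt h]; exact hml
      · have hmk : m + 1 = k := by omega
        rw [hmk, Nat.mod_self]
        intro hh
        exact (hl0 hh.symm) (by omega)
    have tauto : ∀ s0 s1 s2 s3 s4 : Bool,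
        s0 = s2 ∨ s2 = s4 ∨ s1 = s3 ∨ s0 = s3 ∨ s1 = s4 := by decide
    rcases tauto ((c (q 0)).isLeft) ((c (q 1)).isLeft) ((c (q 2)).isLeft)
        ((c (q 3)).isLeft) ((c (q 4)).isLeft) with h | h | h | h | h
    · exact key (q 0) (q 2) h (hqne 0 2 (by omega) (by omega) (by omega))
        (hqnc 0 2 (by omega) (by omega) (by omega) (by intro h; omega)) (hqnc 2 0 (by omega) (by omega) (by omega) (by intro h; omega))
    · exact key (q 2) (q 4) h (hqne 2 4 (by omega) (by omega) (by omega))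
        (hqnc 2 4 (by omega) (by omega) (by omega) (by intro h; omega)) (hqnc 4 2 (by omega) (by omega) (by omega) (by intro h; omega))
    · exact key (q 1) (q 3) h (hqne 1 3 (by omega) (by omega) (by omega))
        (hqnc 1 3 (by omega) (by omega) (by omega) (by intro h; omega)) (hqnc 3 1 (by omega) (by omega) (by omega) (by intro h; omega))
    · exact key (q 0) (q 3) h (hqne 0 3 (by omega) (by omega) (by omega))
        (hqnc 0 3 (by omega) (by omega) (by omega) (by intro h; omega)) (hqnc 3 0 (by omega) (by omega) (by omega) (by intro h; omega))
    · exact key (q 1) (q 4) h (hqne 1 4 (by omega) (by omega) (by omega))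
        (hqnc 1 4 (by omega) (by omega) (by omega) (by intro h; omega)) (hqnc 4 1 (by omega) (by omega) (by omega) (by intro h; omega))
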